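/- If the complement graph G^c of a graph G contains an induced cycle of length at least 6, then G contains an induced cycle of length 4. -/

import Mathlib

/-- `G` has an induced cycle of length `m` iff the cycle graph on `m` vertices embeds into `G`
as an induced subgraph (graph embeddings are isomorphisms onto induced subgraphs). -/
def SimpleGraph.HasInducedCycle {V : Type*} (G : SimpleGraph V) (m : ℕ) : Prop :=
  3 ≤ m ∧ Nonempty (SimpleGraph.cycleGraph m ↪g G)

private lemma fin_sub_val {m : ℕ} (a b : Fin m) :
    (a - b).val = if b.val ≤ a.val then a.val - b.val else a.val + m - b.val := by
  rw [Fin.sub_def]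
  have ha := a.isLt
  have hb := b.isLt
  split
  · have h1 : m - b.val + a.val = m + (a.val - b.val) := by omega
    simp only [h1, Nat.add_mod_left]
    exact Nat.mod_eq_of_lt (by omega)
  · have h1 : m - b.val + a.val = a.val + m - b.val := by omega
    simp only [h1]
    exact Nat.mod_eq_of_lt (by omega)

/-- If `Gᶜ` contains an induced cycle of length at least 6, then `G` contains
an induced cycle of length 4. -/
theorem hasInducedCycle_four_of_compl {V : Type*} (G : SimpleGraph V)
    (m : ℕ) (hm : 6 ≤ m) (h : Gᶜ.HasInducedCycle m) : G.HasInducedCycle 4 := by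
  obtain ⟨-, ⟨e⟩⟩ := h
  have key : ∀ a b : Fin m, G.Adj (e a) (e b) ↔ a ≠ b ∧ ¬ (SimpleGraph.cycleGraph m).Adj a b := by
    intro a b
    constructor
    · intro hadj
      refine ⟨fun hab => hadj.ne (congrArg e hab), fun hc => ?_⟩
      exact ((SimpleGraph.compl_adj G _ _).1 (e.map_adj_iff.2 hc)).2 hadj
    · rintro ⟨hab, hc⟩
      by_contra hG
      exact hc (e.map_adj_iff.1 ((SimpleGraph.compl_adj G _ _).2 ⟨e.injective.ne hab, hG⟩))
  -- map 0 ↦ 0, 1 ↦ 3, 2 ↦ 1, 3 ↦ 4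
  let g : Fin 4 → Fin m := ![⟨0, by omega⟩, ⟨3, by omega⟩, ⟨1, by omega⟩, ⟨4, by omega⟩]
  refine ⟨by norm_num, ⟨⟨⟨fun i => e (g i), ?_⟩, ?_⟩⟩⟩
  · intro i j hij
    have := e.injective hij
    fin_cases i <;> fin_cases j <;> simp_all [g, Fin.ext_iff]
  · intro i j
    show G.Adj (e (g i)) (e (g j)) ↔ _
    rw [key, SimpleGraph.cycleGraph_adj', fin_sub_val, fin_sub_val, ne_eq, Fin.ext_iff,
      SimpleGraph.cycleGraph_adj', fin_sub_val, fin_sub_val]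
    fin_cases i <;> fin_cases j <;> simp [g] <;> omega
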